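/- Let T ≥ 8 be an integer and δ a real number with 2π/T < |δ| ≤ 4π/3. Define α = (√2/T)·Σ_{τ=0}^{T−1} e^{iτδ}·sin(π(τ + 1/2)/T). Then |α| ≤ 3√2·π³/(T²·δ²). -/

import Mathlib

open Real Complex


lemma cos_one_sub (y : ℝ) : Real.cos y = 1 - 2 * Real.sin (y/2)^2 := by
  have h1 := Real.cos_two_mul' (y/2)
  rw [show 2*(y/2) = y by ring] at h1
  have h2 := Real.sin_sq_add_cos_sq (y/2)
  linarith

set_option maxHeartbeats 1000000 in
lemma keyIneq {T : ℕ} (hT : 8 ≤ T) {d : ℝ} (hl : 2*π/T < d) (hu : d ≤ 4*π/3) :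
    |Real.cos (d/2)| * d^2 ≤ 3*π^2 * (Real.cos (π/T) - Real.cos d) ∧
    0 < Real.cos (π/T) - Real.cos d := by
  have hπ : 0 < π := pi_pos
  have hπ315 : π < 3.15 := pi_lt_d2
  have hπ3 : 3 < π := pi_gt_three
  have hπsq : π^2 < 10 := by nlinarith
  have hπsq' : 9 < π^2 := by nlinarith
  have hT8 : (8:ℝ) ≤ T := by exact_mod_cast hT
  have hT0 : (0:ℝ) < T := by linarith
  have hd0 : 0 < d := lt_trans (by positivity) hl
  have hident : Real.cos (π/T) - Real.cos d
      = 2 * Real.sin (d/2)^2 - 2 * Real.sin (π/(2*T))^2 := by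
    rw [cos_one_sub (π/T), cos_one_sub d]
    ring_nf
  have hsT0 : 0 ≤ Real.sin (π/(2*T)) :=
    Real.sin_nonneg_of_nonneg_of_le_pi (by positivity) (by
      rw [div_le_iff₀ (by positivity)]
      nlinarith)
  have hsTle : Real.sin (π/(2*T)) ≤ π/(2*T) := Real.sin_le (by positivity)
  have hd4 : π/(2*T) < d/4 := by
    rw [div_lt_div_iff₀ (by positivity) (by norm_num)]
    rw [div_lt_iff₀ hT0] at hl
    nlinarith
  rcases le_or_gt d π with hcase | hcase
  · -- d ≤ π
    have hsd : d/π ≤ Real.sin (d/2) := by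
      have := Real.mul_le_sin (x := d/2) (by positivity) (by linarith)
      calc d/π = 2/π * (d/2) := by ring
        _ ≤ _ := this
    have hsq : Real.sin (π/(2*T))^2 ≤ (d/4)^2 :=
      pow_le_pow_left₀ hsT0 (by linarith) 2
    have hsd2 : (d/π)^2 ≤ Real.sin (d/2)^2 :=
      pow_le_pow_left₀ (by positivity) hsd 2
    have hsin_sq : d^2 ≤ π^2 * Real.sin (d/2)^2 := by
      have h := mul_le_mul_of_nonneg_left hsd2 (le_of_lt (by positivity : (0:ℝ) < π^2))
      have : π^2 * (d/π)^2 = d^2 := by field_simp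
      linarith
    have habs : |Real.cos (d/2)| ≤ 1 := Real.abs_cos_le_one _
    have hkey : d^2 ≤ 3*π^2 * (Real.cos (π/T) - Real.cos d) := by
      rw [hident]
      nlinarith [sq_nonneg d, mul_le_mul_of_nonneg_left hsq (le_of_lt (by positivity : (0:ℝ) < π^2))]
    have hpos : 0 < Real.cos (π/T) - Real.cos d := by
      rw [hident]
      have h45 : d/4 < d/π := div_lt_div_of_pos_left hd0 hπ (by linarith)
      have h40 : (0:ℝ) ≤ d/4 := by positivity
      nlinarith
    constructor
    · have h1 : |Real.cos (d/2)| * d^2 ≤ 1 * d^2 :=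
        mul_le_mul_of_nonneg_right habs (sq_nonneg d)
      linarith
    · exact hpos
  · -- π < d
    have h1 : Real.cos (d/2) ≤ 0 :=
      Real.cos_nonpos_of_pi_div_two_le_of_le (by linarith) (by linarith)
    have h2 : Real.cos (2*π/3) ≤ Real.cos (d/2) :=
      Real.cos_le_cos_of_nonneg_of_le_pi (by positivity) (by linarith) (by linarith)
    have hc23 : Real.cos (2*π/3) = -(1/2) := by
      rw [show (2*π/3 : ℝ) = π - π/3 by ring, Real.cos_pi_sub, Real.cos_pi_div_three]
    rw [hc23] at h2
    have habs : |Real.cos (d/2)| ≤ 1/2 := abs_le.2 ⟨by linarith, by linarith⟩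
    have hsin2 : 3/4 ≤ Real.sin (d/2)^2 := by
      have hpy := Real.sin_sq_add_cos_sq (d/2)
      have hm : Real.cos (d/2)^2 ≤ (1/2)^2 := by
        have := pow_le_pow_left₀ (abs_nonneg (Real.cos (d/2))) habs 2
        rwa [_root_.sq_abs] at this
      norm_num at hm
      linarith
    have hsT16 : Real.sin (π/(2*T)) ≤ π/16 := by
      have h : π/(2*T) ≤ π/16 := by
        gcongr
        linarith
      linarith
    have hsTsq : Real.sin (π/(2*T))^2 ≤ (π/16)^2 :=
      pow_le_pow_left₀ hsT0 hsT16 2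
    have hlow : 3/2 - 2*(π/16)^2 ≤ Real.cos (π/T) - Real.cos d := by
      rw [hident]; linarith
    have hdsq : d^2 ≤ (4*π/3)^2 := pow_le_pow_left₀ (le_of_lt hd0) hu 2
    constructor
    · have h3 : |Real.cos (d/2)| * d^2 ≤ 1/2 * (4*π/3)^2 :=
        mul_le_mul habs hdsq (sq_nonneg d) (by norm_num)
      have h4 : 1/2*(4*π/3)^2 ≤ 3*π^2 * (3/2 - 2*(π/16)^2) := by nlinarith [hπsq, hπsq']
      have h5 := mul_le_mul_of_nonneg_left hlow (by positivity : (0:ℝ) ≤ 3*π^2)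
      linarith
    · nlinarith [hlow, hπsq]


set_option maxHeartbeats 2000000 in
theorem stmt6 (T : ℕ) (hT : 8 ≤ T) (δ : ℝ)
    (hδl : 2 * π / T < |δ|) (hδu : |δ| ≤ 4 * π / 3) :
    ‖(Real.sqrt 2 / T : ℂ) * ∑ τ ∈ Finset.range T,
        Complex.exp (Complex.I * τ * δ) * (Real.sin (π * (τ + 1/2) / T) : ℂ)‖
      ≤ 3 * Real.sqrt 2 * π^3 / (T^2 * δ^2) := by
  have hπ : 0 < π := pi_pos
  have hT8 : (8:ℝ) ≤ T := by exact_mod_cast hT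
  have hT0 : (0:ℝ) < T := by linarith
  have hTC : (T:ℂ) ≠ 0 := by exact_mod_cast ne_of_gt hT0
  set x : ℝ := π/(2*T) with hx
  set u : ℂ := Complex.exp (x*I) with hu
  set v : ℂ := Complex.exp (-x*I) with hv
  set w : ℂ := Complex.exp ((δ:ℂ)*I) with hw
  have huv : u * v = 1 := by
    rw [hu, hv, ← Complex.exp_add]; norm_num
  have husin : u - v = 2*I*(Real.sin x : ℂ) := by
    rw [Complex.ofReal_sin, Complex.sin, hu, hv]
    push_cast
    ring_nf
    rw [Complex.I_sq]
    ring
  have hterm : ∀ τ ∈ Finset.range T,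
      Complex.exp (Complex.I * τ * δ) * (Real.sin (π * (τ + 1/2) / T) : ℂ)
      = (v*I/2) * (w*v^2)^τ - (u*I/2) * (w*u^2)^τ := by
    intro τ _
    have hA : v * (w*v^2)^τ = Complex.exp (-x*I + τ*((δ:ℂ)*I + (-x*I + -x*I))) := by
      rw [hv, hw, sq, ← Complex.exp_add, ← Complex.exp_add, ← Complex.exp_nat_mul,
        ← Complex.exp_add]
    have hB : u * (w*u^2)^τ = Complex.exp (x*I + τ*((δ:ℂ)*I + (x*I + x*I))) := by
      rw [hu, hw, sq, ← Complex.exp_add, ← Complex.exp_add, ← Complex.exp_nat_mul,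
        ← Complex.exp_add]
    rw [Complex.ofReal_sin, Complex.sin]
    have h1 : Complex.exp (Complex.I * τ * δ) * Complex.exp (-(π * (τ + 1/2) / T : ℝ) * I)
        = Complex.exp (-x*I + τ*((δ:ℂ)*I + (-x*I + -x*I))) := by
      rw [← Complex.exp_add]
      congr 1
      push_cast [hx]
      field_simp
      ring
    have h2 : Complex.exp (Complex.I * τ * δ) * Complex.exp ((π * (τ + 1/2) / T : ℝ) * I)
        = Complex.exp (x*I + τ*((δ:ℂ)*I + (x*I + x*I))) := by
      rw [← Complex.exp_add]
      congr 1
      push_cast [hx]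
      field_simp
      ring
    linear_combination (Complex.I/2) * h1 - (Complex.I/2) * h2
      - (Complex.I/2) * hA + (Complex.I/2) * hB
  -- closed forms for w*u^2, w*v^2
  have hwu : w*u^2 = Complex.exp (((δ + π/T : ℝ) : ℂ) * I) := by
    rw [hu, hw, sq, ← Complex.exp_add, ← Complex.exp_add]
    congr 1
    push_cast [hx]
    field_simp
    ring
  have hwv : w*v^2 = Complex.exp (((δ - π/T : ℝ) : ℂ) * I) := by
    rw [hv, hw, sq, ← Complex.exp_add, ← Complex.exp_add]
    congr 1
    push_cast [hx]
    field_simp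
    ring
  have hsum : ∑ τ ∈ Finset.range T,
      Complex.exp (Complex.I * τ * δ) * (Real.sin (π * (τ + 1/2) / T) : ℂ)
      = (v*I/2) * (∑ τ ∈ Finset.range T, (w*v^2)^τ)
        - (u*I/2) * (∑ τ ∈ Finset.range T, (w*u^2)^τ) := by
    rw [Finset.sum_congr rfl hterm, Finset.sum_sub_distrib, Finset.mul_sum, Finset.mul_sum]
  have hgv := geom_sum_mul (w*v^2) T
  have hgu := geom_sum_mul (w*u^2) T
  have hwT : w^T = Complex.exp ((T:ℂ)*((δ:ℂ)*I)) := by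
    rw [hw, ← Complex.exp_nat_mul]
  have hpowv : (w*v^2)^T = -(w^T) := by
    rw [hwv, ← Complex.exp_nat_mul, hwT,
      show (T:ℂ)*(((δ - π/T : ℝ) : ℂ)*I) = (T:ℂ)*((δ:ℂ)*I) - (π:ℂ)*I by
        push_cast; field_simp,
      Complex.exp_sub, Complex.exp_pi_mul_I, div_neg, div_one]
  have hpowu : (w*u^2)^T = -(w^T) := by
    rw [hwu, ← Complex.exp_nat_mul, hwT,
      show (T:ℂ)*(((δ + π/T : ℝ) : ℂ)*I) = (T:ℂ)*((δ:ℂ)*I) + (π:ℂ)*I by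
        push_cast; field_simp,
      Complex.exp_add, Complex.exp_pi_mul_I]
    ring
  have hSD : (∑ τ ∈ Finset.range T,
      Complex.exp (Complex.I * τ * δ) * (Real.sin (π * (τ + 1/2) / T) : ℂ))
      * ((w*v^2 - 1) * (w*u^2 - 1))
      = (w^T + 1) * (w + 1) * (Real.sin x : ℂ) := by
    rw [hsum]
    linear_combination (v*I/2)*(w*u^2-1) * hgv - (u*I/2)*(w*v^2-1) * hgu
      + (v*I/2)*(w*u^2-1) * hpowv - (u*I/2)*(w*v^2-1) * hpowu
      + (Complex.I/2)*((w:ℂ)^T+1)*(w*v - w*u) * huv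
      - (Complex.I/2)*((w:ℂ)^T+1)*(w+1) * husin
      - (w+1)*((w:ℂ)^T+1)*((Real.sin x : ℝ) : ℂ) * Complex.I_sq
  -- absolute value computations
  have habsw1 : ‖w + 1‖ = 2*|Real.cos (δ/2)| := by
    have e1 : Complex.exp ((((δ/2 : ℝ)) : ℂ) * I) * Complex.exp ((((δ/2 : ℝ)) : ℂ) * I)
        = Complex.exp ((δ:ℂ)*I) := by
      rw [← Complex.exp_add]
      congr 1
      push_cast
      ring
    have e2 : Complex.exp ((((δ/2 : ℝ)) : ℂ) * I) * Complex.exp (-(((δ/2 : ℝ)) : ℂ) * I) = 1 := by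
      rw [← Complex.exp_add]
      norm_num
    have hsplit : w + 1 = Complex.exp ((((δ/2 : ℝ)) : ℂ) * I) * (2*((Real.cos (δ/2):ℝ):ℂ)) := by
      rw [Complex.ofReal_cos, Complex.cos, hw]
      push_cast at e1 e2 ⊢
      linear_combination -e1 - e2
    rw [hsplit, norm_mul, Complex.norm_exp_ofReal_mul_I, one_mul]
    rw [show (2*((Real.cos (δ/2):ℝ):ℂ)) = (((2*Real.cos (δ/2) : ℝ)):ℂ) by push_cast; ring,
      Complex.norm_real, Real.norm_eq_abs, abs_mul]
    norm_num
  have habsw : ‖w‖ = 1 := by rw [hw]; exact Complex.norm_exp_ofReal_mul_I δ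
  have habswT : ‖w^T + 1‖ ≤ 2 := by
    calc ‖w^T + 1‖ ≤ ‖w^T‖ + ‖(1:ℂ)‖ := norm_add_le _ _
      _ = 1 + 1 := by rw [norm_pow, habsw, one_pow, norm_one]
      _ = 2 := by norm_num
  have hu2 : u^2 = Complex.exp (((π/T : ℝ) : ℂ) * I) := by
    rw [hu, sq, ← Complex.exp_add]
    congr 1
    push_cast [hx]
    field_simp
    ring
  have hv2 : v^2 = Complex.exp (-((π/T : ℝ) : ℂ) * I) := by
    rw [hv, sq, ← Complex.exp_add]
    congr 1
    push_cast [hx]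
    field_simp
    ring
  have hu2v2 : u^2 + v^2 = 2*((Real.cos (π/T) : ℝ):ℂ) := by
    rw [Complex.ofReal_cos, Complex.cos, hu2, hv2]
    ring
  have hw21 : w^2 + 1 = w * (2*((Real.cos δ : ℝ):ℂ)) := by
    have e2 : Complex.exp ((δ:ℂ)*I) * Complex.exp (-(δ:ℂ)*I) = 1 := by
      rw [← Complex.exp_add]
      norm_num
    rw [Complex.ofReal_cos, Complex.cos, hw]
    linear_combination -e2
  have hD : (w*v^2 - 1) * (w*u^2 - 1) = w * (((2*Real.cos δ - 2*Real.cos (π/T) : ℝ)) : ℂ) := by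
    push_cast
    push_cast at hu2v2 hw21
    linear_combination (w^2*(u*v+1)) * huv - w * hu2v2 + hw21
  have habsD : ‖(w*v^2 - 1) * (w*u^2 - 1)‖
      = |2*Real.cos δ - 2*Real.cos (π/T)| := by
    rw [hD, norm_mul, habsw, one_mul, Complex.norm_real, Real.norm_eq_abs]
  -- the key real inequality
  obtain ⟨hkey, hCpos⟩ := keyIneq hT hδl hδu
  have hcosabs : Real.cos |δ| = Real.cos δ := Real.cos_abs δ
  have hcoshalf : |Real.cos (|δ|/2)| = |Real.cos (δ/2)| := by
    rw [show |δ|/2 = |δ/2| by rw [abs_div]; norm_num, Real.cos_abs]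
  rw [hcosabs] at hkey hCpos
  rw [hcoshalf, _root_.sq_abs] at hkey
  set C : ℝ := Real.cos (π/T) - Real.cos δ with hC
  have hdne : δ ≠ 0 := by
    intro h
    rw [h, abs_zero] at hδl
    have : 0 < 2*π/T := by positivity
    linarith
  have hd2 : (0:ℝ) < δ^2 := by positivity
  -- bound on the sum
  have hx0 : 0 < x := by rw [hx]; positivity
  have hsx0 : 0 ≤ Real.sin x :=
    Real.sin_nonneg_of_nonneg_of_le_pi (le_of_lt hx0) (by
      rw [hx, div_le_iff₀ (by positivity)]
      nlinarith)
  have hsxle : Real.sin x ≤ x := Real.sin_le (le_of_lt hx0)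
  have habs_sum : ‖∑ τ ∈ Finset.range T,
      Complex.exp (Complex.I * τ * δ) * (Real.sin (π * (τ + 1/2) / T) : ℂ)‖ * (2*C)
      ≤ 2 * (2*|Real.cos (δ/2)|) * x := by
    have h1 : ‖_‖ = ‖_‖ := congrArg (fun z : ℂ => ‖z‖) hSD
    rw [norm_mul, habsD, norm_mul, norm_mul, habsw1, Complex.norm_real, Real.norm_eq_abs,
      _root_.abs_of_nonneg hsx0] at h1
    have habs2C : |2*Real.cos δ - 2*Real.cos (π/T)| = 2*C := by
      have h0 : 2*Real.cos δ - 2*Real.cos (π/T) ≤ 0 := by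
        have h' := hCpos
        rw [hC] at h'
        linarith
      rw [abs_of_nonpos h0, hC]
      ring
    rw [habs2C] at h1
    rw [h1]
    have c0 : (0:ℝ) ≤ 2*|Real.cos (δ/2)| := by positivity
    calc ‖w^T + 1‖ * (2*|Real.cos (δ/2)|) * Real.sin x
        ≤ 2 * (2*|Real.cos (δ/2)|) * Real.sin x := by
          apply mul_le_mul_of_nonneg_right _ hsx0
          exact mul_le_mul_of_nonneg_right habswT c0
      _ ≤ 2 * (2*|Real.cos (δ/2)|) * x := by
          apply mul_le_mul_of_nonneg_left hsxle (by positivity)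
  have hcdiv : |Real.cos (δ/2)| ≤ 3*π^2*C/δ^2 := by
    rw [le_div_iff₀ hd2]
    exact hkey
  have hSle : ‖∑ τ ∈ Finset.range T,
      Complex.exp (Complex.I * τ * δ) * (Real.sin (π * (τ + 1/2) / T) : ℂ)‖
      ≤ 3*π^3/(T*δ^2) := by
    have h2C : (0:ℝ) < 2*C := by linarith
    rw [le_div_iff₀ (by positivity)]
    have step : 2 * (2*|Real.cos (δ/2)|) * x ≤ 2 * (2*(3*π^2*C/δ^2)) * x := by
      gcongr
    have heq : 2 * (2*(3*π^2*C/δ^2)) * x * (T*δ^2) = 3*π^3 * (2*C) := by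
      rw [hx]
      field_simp
    have h3 := le_trans habs_sum step
    have h4 := mul_le_mul_of_nonneg_right h3 (by positivity : (0:ℝ) ≤ (T:ℝ)*δ^2)
    rw [heq] at h4
    rw [show ‖∑ τ ∈ Finset.range T,
        Complex.exp (Complex.I * τ * δ) * (Real.sin (π * (τ + 1/2) / T) : ℂ)‖ * (2*C) * ((T:ℝ)*δ^2)
      = ‖∑ τ ∈ Finset.range T,
        Complex.exp (Complex.I * τ * δ) * (Real.sin (π * (τ + 1/2) / T) : ℂ)‖ * ((T:ℝ)*δ^2) * (2*C)
      from by ring] at h4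
    exact le_of_mul_le_mul_right h4 h2C
  have hTR : (T:ℝ) ≠ 0 := ne_of_gt hT0
  rw [norm_mul, norm_div, Complex.norm_real, Real.norm_eq_abs, Complex.norm_natCast,
    _root_.abs_of_nonneg (Real.sqrt_nonneg 2)]
  calc Real.sqrt 2 / (T:ℝ) * ‖∑ τ ∈ Finset.range T,
        Complex.exp (Complex.I * τ * δ) * (Real.sin (π * (τ + 1/2) / T) : ℂ)‖
      ≤ Real.sqrt 2 / (T:ℝ) * (3*π^3/(T*δ^2)) :=
        mul_le_mul_of_nonneg_left hSle (by positivity)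
    _ = 3 * Real.sqrt 2 * π^3 / ((T:ℝ)^2 * δ^2) := by
        field_simp
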